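/- arXiv:1108.6177 — 7 statements merged into one kernel-verified Lean document; each statement's English description precedes it below -/
import Mathlib

section
/- On a quasi Yamabe gradient soliton, the scalar curvature satisfies ∇ᵢR = (1/m)(R - ρ)∇ᵢf - (1/(n-1))R_{ij}∇ʲf, where R_{ij} is the Ricci tensor. -/
/-- On a quasi Yamabe gradient soliton
`(R - ρ) g_{ij} = ∇ᵢ∇ⱼf - (1/m)∇ᵢf∇ⱼf` (at a point, orthonormal frame;
`Hf i j = f_{ij}`, `D3 i j k = ∇ₖ f_{ij}`, `dR i = ∇ᵢ R`), the scalar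
curvature satisfies `∇ᵢR = (1/m)(R - ρ)∇ᵢf - (1/(n-1)) R_{ij} ∇ʲf`.
Hypotheses: `hder` is the covariant derivative of the soliton equation,
`hRicciId` is the commutation (Ricci) identity
`∑ⱼ f_{ijj} = ∇ᵢ(Δf) + R_{ij} f_j` for third covariant derivatives of `f`. -/
theorem quasi_yamabe_grad_scalar (n : ℕ) (hn : 3 ≤ n) (m ρ R : ℝ) (hm : m ≠ 0)
    (Hf : Fin n → Fin n → ℝ) (df dR : Fin n → ℝ)
    (D3 : Fin n → Fin n → Fin n → ℝ) (Ric : Fin n → Fin n → ℝ)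
    (hsoliton : ∀ i j, (R - ρ) * (if i = j then (1 : ℝ) else 0) =
      Hf i j - (1 / m) * (df i * df j))
    (hder : ∀ i j k, D3 i j k =
      dR k * (if i = j then (1 : ℝ) else 0)
        + (1 / m) * (Hf i k * df j + df i * Hf j k))
    (hRicciId : ∀ i, ∑ j, D3 i j j = (∑ j, D3 j j i) + ∑ j, Ric i j * df j) :
    ∀ i, dR i = (1 / m) * (R - ρ) * df i
      - (1 / ((n : ℝ) - 1)) * ∑ j, Ric i j * df j := by
  intro i
  have hHf : ∀ i j, Hf i j = (R - ρ) * (if i = j then (1 : ℝ) else 0)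
      + (1 / m) * (df i * df j) := fun i j => by linarith [hsoliton i j]
  set T := ∑ j, df j * df j with hT
  have hA : ∑ j, Hf i j * df j = (R - ρ) * df i + 1 / m * (df i * T) := by
    calc ∑ j, Hf i j * df j
        = ∑ j, ((if i = j then (R - ρ) * df j else 0) + 1 / m * df i * (df j * df j)) :=
          Finset.sum_congr rfl fun j _ => by rw [hHf]; split <;> ring
      _ = (R - ρ) * df i + 1 / m * (df i * T) := by
          rw [Finset.sum_add_distrib, Finset.sum_ite_eq, ← Finset.mul_sum, ← hT]
          simp; ring
  have hB : ∑ j, Hf j i * df j = (R - ρ) * df i + 1 / m * (df i * T) := by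
    calc ∑ j, Hf j i * df j
        = ∑ j, ((if j = i then (R - ρ) * df j else 0) + 1 / m * df i * (df j * df j)) :=
          Finset.sum_congr rfl fun j _ => by rw [hHf]; split <;> ring
      _ = (R - ρ) * df i + 1 / m * (df i * T) := by
          rw [Finset.sum_add_distrib, Finset.sum_ite_eq', ← Finset.mul_sum, ← hT]
          simp; ring
  have hC : ∑ j, Hf j j = (n : ℝ) * (R - ρ) + 1 / m * T := by
    calc ∑ j, Hf j j = ∑ j, ((R - ρ) + 1 / m * (df j * df j)) :=
          Finset.sum_congr rfl fun j _ => by rw [hHf]; simp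
      _ = (n : ℝ) * (R - ρ) + 1 / m * T := by
          rw [Finset.sum_add_distrib, ← Finset.mul_sum, ← hT, Finset.sum_const,
            Finset.card_univ, Fintype.card_fin, nsmul_eq_mul]
  have h1 : ∑ j, D3 i j j
      = dR i + 1 / m * (∑ j, Hf i j * df j) + 1 / m * df i * (∑ j, Hf j j) := by
    calc ∑ j, D3 i j j
        = ∑ j, ((if i = j then dR j else 0) + 1 / m * (Hf i j * df j)
            + 1 / m * df i * Hf j j) :=
          Finset.sum_congr rfl fun j _ => by rw [hder]; split <;> ring
      _ = _ := by
          rw [Finset.sum_add_distrib, Finset.sum_add_distrib, Finset.sum_ite_eq,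
            ← Finset.mul_sum, ← Finset.mul_sum]
          simp
  have h2 : ∑ j, D3 j j i
      = (n : ℝ) * dR i + 1 / m * (∑ j, Hf j i * df j) + 1 / m * (∑ j, df j * Hf j i) := by
    calc ∑ j, D3 j j i
        = ∑ j, (dR i + 1 / m * (Hf j i * df j) + 1 / m * (df j * Hf j i)) :=
          Finset.sum_congr rfl fun j _ => by rw [hder]; simp; ring
      _ = _ := by
          rw [Finset.sum_add_distrib, Finset.sum_add_distrib, Finset.sum_const,
            Finset.card_univ, Fintype.card_fin, nsmul_eq_mul, ← Finset.mul_sum,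
            ← Finset.mul_sum]
  have hB' : ∑ j, df j * Hf j i = (R - ρ) * df i + 1 / m * (df i * T) := by
    rw [← hB]; exact Finset.sum_congr rfl fun j _ => by ring
  have key := hRicciId i
  rw [h1, h2, hA, hB, hB', hC] at key
  have hn1 : ((n : ℝ) - 1) ≠ 0 := by
    have : (3 : ℝ) ≤ (n : ℝ) := by exact_mod_cast hn
    linarith
  set S := ∑ j, Ric i j * df j with hS
  have h3 : ((n:ℝ)-1) * dR i = ((n:ℝ)-1)*(1/m)*(R-ρ)*df i - S := by
    linear_combination -key
  have hc : ((n:ℝ)-1) * ((1/((n:ℝ)-1))*S) = S := by field_simp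
  refine mul_left_cancel₀ hn1 ?_
  rw [mul_sub, hc, h3]; ring
end

section
/- On a quasi Yamabe gradient soliton, the commutator of third derivatives of f satisfies ∇ᵢ∇ⱼ∇ₖf - ∇ⱼ∇ᵢ∇ₖf = -(1/(n-1))(R_{il}g_{jk}∇ˡf - R_{jl}g_{ik}∇ˡf). -/
/-- On a quasi Yamabe gradient soliton (at a point, in an
orthonormal frame, `D3 k j i = ∇ᵢ∇ⱼ∇ₖ f = f_{kji}`), the commutator of
third derivatives of `f` satisfies
`f_{kji} - f_{kij} = -(1/(n-1)) (R_{il} g_{jk} ∇ˡf - R_{jl} g_{ik} ∇ˡf)`.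
Hypotheses: `hder` (covariant derivative of the soliton equation) and
`hRicciId` (Ricci identity for `∑ⱼ f_{ijj}`). -/
theorem quasi_yamabe_third_deriv_commutator (n : ℕ) (hn : 3 ≤ n) (m ρ R : ℝ)
    (hm : m ≠ 0) (Hf : Fin n → Fin n → ℝ) (df dR : Fin n → ℝ)
    (D3 : Fin n → Fin n → Fin n → ℝ) (Ric : Fin n → Fin n → ℝ)
    (hsoliton : ∀ i j, (R - ρ) * (if i = j then (1 : ℝ) else 0) =
      Hf i j - (1 / m) * (df i * df j))
    (hder : ∀ i j k, D3 i j k =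
      dR k * (if i = j then (1 : ℝ) else 0)
        + (1 / m) * (Hf i k * df j + df i * Hf j k))
    (hRicciId : ∀ i, ∑ j, D3 i j j = (∑ j, D3 j j i) + ∑ j, Ric i j * df j) :
    ∀ i j k, D3 k j i - D3 k i j =
      -(1 / ((n : ℝ) - 1)) *
        ((∑ l, Ric i l * df l) * (if j = k then (1 : ℝ) else 0)
          - (∑ l, Ric j l * df l) * (if i = k then (1 : ℝ) else 0)) := by
  have hn1 : ((n : ℝ) - 1) ≠ 0 := by
    have : (3 : ℝ) ≤ (n : ℝ) := by exact_mod_cast hn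
    linarith
  have hHf : ∀ i j, Hf i j = (R - ρ) * (if i = j then (1 : ℝ) else 0)
      + (1 / m) * (df i * df j) := by
    intro i j; have := hsoliton i j; linarith
  set F : ℝ := ∑ j, df j * df j with hF
  have hsum1 : ∀ i, ∑ j, Hf i j * df j = (R - ρ) * df i + (1 / m) * (df i * F) := by
    intro i
    simp only [hHf, add_mul]
    rw [Finset.sum_add_distrib]
    congr 1
    · simp [ite_mul, mul_ite]
    · simp only [hF, Finset.mul_sum]
      exact Finset.sum_congr rfl fun j _ => by ring
  have htr : ∑ j, Hf j j = (n : ℝ) * (R - ρ) + (1 / m) * F := by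
    simp only [hHf, if_pos rfl, mul_one]
    rw [Finset.sum_add_distrib]
    congr 1
    · simp [mul_comm]; ring
    · rw [hF, Finset.mul_sum]
  have hS : ∀ i, ∑ l, Ric i l * df l
      = (1 - (n : ℝ)) * dR i + ((n : ℝ) - 1) * (R - ρ) / m * df i := by
    intro i
    have h := hRicciId i
    have e1 : ∑ j, D3 i j j
        = dR i + (1 / m) * ((∑ j, Hf i j * df j) + df i * (∑ j, Hf j j)) := by
      simp only [hder]
      rw [Finset.sum_add_distrib]
      congr 1
      · simp [mul_ite]
      · rw [← Finset.mul_sum, Finset.sum_add_distrib, ← Finset.mul_sum]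
    have e2 : ∑ j, D3 j j i
        = (n : ℝ) * dR i + (1 / m) * (2 * (∑ j, Hf i j * df j)) := by
      simp only [hder, if_pos rfl, mul_one]
      rw [Finset.sum_add_distrib, ← Finset.mul_sum]
      have key : ∀ j, Hf j i * df j + df j * Hf j i = 2 * (Hf i j * df j) := by
        intro j
        have hsym : Hf j i = Hf i j := by
          have hif : (if j = i then (1:ℝ) else 0) = (if i = j then 1 else 0) := by
            by_cases h' : i = j <;> simp [h', Ne.symm]
          rw [hHf, hHf, hif]; ring
        rw [hsym]; ring
      simp only [key]
      rw [← Finset.mul_sum, ← Finset.mul_sum]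
      simp [Finset.sum_const, Finset.card_fin, nsmul_eq_mul, mul_comm]
    rw [e1, e2, hsum1, htr] at h
    linear_combination -h
  intro i j k
  rw [hder, hder, hS, hS]
  simp only [hHf]
  by_cases hjk : j = k <;> by_cases hik : i = k <;> by_cases hij : i = j <;>
    simp [hjk, hik, hij, eq_comm] <;> field_simp <;> ring
end

section
/- At a point where ∇f ≠ 0, choosing an orthonormal frame {e₁,…,eₙ} with e₁ = ∇f/|∇f|, the squared norm of D satisfies |D_{ijk}|² = (2|∇f|²/((n-1)(n-2)²))·[(n-2)Σ_a R_{1a}² + (n-1)Σ_{a,b}|R_{ab} - ((R - R_{11})/(n-1))g_{ab}|²], where indices a,b run from 2 to n. -/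
open Finset

/-- At a point where `∇f ≠ 0`, choosing an orthonormal frame
`{e₁, …, eₙ}` with `e₁ = ∇f/|∇f|` (here the index of `e₁` is `i₀`, so
`df i₀ = |∇f|` and `df a = 0` for `a ≠ i₀`), the squared norm of the
Cao–Chen tensor `D` satisfies
`|D|² = (2|∇f|²/((n-1)(n-2)²)) ((n-2) ∑ₐ R_{1a}²
  + (n-1) ∑_{a,b} |R_{ab} - ((R - R_{11})/(n-1)) g_{ab}|²)`,
the indices `a, b` running over the frame directions tangent to the level
surface (`a ≠ i₀`). -/
theorem D_tensor_norm_formula (n : ℕ) (hn : 3 ≤ n) (R : ℝ)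
    (i₀ : Fin n) (df : Fin n → ℝ) (Ric : Fin n → Fin n → ℝ)
    (D : Fin n → Fin n → Fin n → ℝ)
    (hdf : ∀ a, a ≠ i₀ → df a = 0)
    (hdf0 : 0 ≤ df i₀)
    (hRicsymm : ∀ i j, Ric i j = Ric j i)
    (hRtrace : R = ∑ i, Ric i i)
    (hDdef : ∀ i j k, D i j k =
      (1 / ((n : ℝ) - 2)) * (Ric k j * df i - Ric k i * df j)
      + (1 / (((n : ℝ) - 1) * ((n : ℝ) - 2))) *
          ((∑ l, Ric i l * df l) * (if j = k then (1 : ℝ) else 0)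
            - (∑ l, Ric j l * df l) * (if i = k then (1 : ℝ) else 0))
      - (R / (((n : ℝ) - 1) * ((n : ℝ) - 2))) *
          ((if k = j then (1 : ℝ) else 0) * df i
            - (if k = i then (1 : ℝ) else 0) * df j)) :
    ∑ i, ∑ j, ∑ k, (D i j k) ^ 2 =
      (2 * df i₀ ^ 2 / (((n : ℝ) - 1) * ((n : ℝ) - 2) ^ 2)) *
        (((n : ℝ) - 2) * (∑ a ∈ univ.filter (fun a => a ≠ i₀), Ric i₀ a ^ 2)
          + ((n : ℝ) - 1) *
            ∑ a ∈ univ.filter (fun a => a ≠ i₀),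
              ∑ b ∈ univ.filter (fun b => b ≠ i₀),
                (Ric a b - (R - Ric i₀ i₀) / ((n : ℝ) - 1) *
                  (if a = b then (1 : ℝ) else 0)) ^ 2) := by
  have hn3 : (3:ℝ) ≤ (n:ℝ) := by exact_mod_cast hn
  have hn1 : ((n:ℝ) - 1) ≠ 0 := by linarith
  have hn2 : ((n:ℝ) - 2) ≠ 0 := by linarith
  simp only [Finset.filter_ne']
  set u := df i₀ with hu
  set S : Finset (Fin n) := Finset.univ.erase i₀ with hS
  have hmem : ∀ a ∈ S, a ≠ i₀ := fun a ha => (Finset.mem_erase.1 ha).1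
  have hcard : (S.card : ℝ) = (n:ℝ) - 1 := by
    rw [hS, Finset.card_erase_of_mem (Finset.mem_univ i₀), Finset.card_univ,
      Fintype.card_fin]
    have h1 : 1 ≤ n := by omega
    rw [Nat.cast_sub h1, Nat.cast_one]
  have hsuml : ∀ i, (∑ l, Ric i l * df l) = Ric i i₀ * u := by
    intro i
    rw [Finset.sum_eq_single i₀]
    · intro b _ hb; rw [hdf b hb, mul_zero]
    · intro h; exact absurd (Finset.mem_univ i₀) h
  -- case values of D
  have hDanti : ∀ i j k, D i j k = -D j i k := by
    intro i j k; rw [hDdef, hDdef]; ring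
  have c0 : ∀ k, D i₀ i₀ k = 0 := by
    intro k; rw [hDdef, hsuml]; ring
  have c1 : ∀ a, a ≠ i₀ → D i₀ a i₀ = u * Ric i₀ a / ((n:ℝ) - 1) := by
    intro a ha
    rw [hDdef, hsuml, hsuml, hdf a ha, hRicsymm a i₀]
    simp only [ha, Ne.symm ha, if_true, if_false, if_neg, if_pos rfl, ite_true, ite_false]
    field_simp
    ring
  have c2 : ∀ a, a ≠ i₀ → D a i₀ i₀ = -(u * Ric i₀ a / ((n:ℝ) - 1)) := by
    intro a ha
    rw [hDanti, c1 a ha]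
  have c3 : ∀ a b, a ≠ i₀ → b ≠ i₀ → D i₀ a b =
      u * (Ric a b - (R - Ric i₀ i₀) / ((n:ℝ) - 1) * (if a = b then (1:ℝ) else 0)) /
        ((n:ℝ) - 2) := by
    intro a b ha hb
    rw [hDdef, hsuml, hsuml, hdf a ha, hRicsymm b a]
    by_cases hab : a = b
    · subst hab
      simp only [ha, Ne.symm ha, if_pos rfl, if_neg, ite_true, ite_false]
      field_simp
      ring
    · simp only [ha, hb, hab, Ne.symm ha, Ne.symm hb, Ne.symm hab, if_neg, if_pos rfl,
        ite_true, ite_false]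
      field_simp
      ring
  have c4 : ∀ a b, a ≠ i₀ → b ≠ i₀ → D a i₀ b =
      -(u * (Ric a b - (R - Ric i₀ i₀) / ((n:ℝ) - 1) * (if a = b then (1:ℝ) else 0)) /
        ((n:ℝ) - 2)) := by
    intro a b ha hb
    rw [hDanti, c3 a b ha hb]
  have c5 : ∀ a b, a ≠ i₀ → b ≠ i₀ → D a b i₀ = 0 := by
    intro a b ha hb
    rw [hDdef, hsuml, hsuml, hdf a ha, hdf b hb]
    simp only [ha, hb, Ne.symm ha, Ne.symm hb, if_neg, ite_false]
    ring
  have c6 : ∀ a b c, a ≠ i₀ → b ≠ i₀ → c ≠ i₀ → D a b c =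
      u * (Ric i₀ a * (if b = c then (1:ℝ) else 0)
            - Ric i₀ b * (if a = c then (1:ℝ) else 0)) /
        (((n:ℝ) - 1) * ((n:ℝ) - 2)) := by
    intro a b c ha hb hc
    rw [hDdef, hsuml, hsuml, hdf a ha, hdf b hb, hRicsymm a i₀, hRicsymm b i₀]
    generalize (if b = c then (1:ℝ) else 0) = x
    generalize (if a = c then (1:ℝ) else 0) = y
    generalize (if c = b then (1:ℝ) else 0) = z
    generalize (if c = a then (1:ℝ) else 0) = w
    field_simp
    ring
  -- the inner sums over k
  have hsq : ∀ a ∈ S, ∀ b ∈ S,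
      (∑ c ∈ S, (u * (Ric i₀ a * (if b = c then (1:ℝ) else 0)
            - Ric i₀ b * (if a = c then (1:ℝ) else 0)) /
          (((n:ℝ) - 1) * ((n:ℝ) - 2))) ^ 2) =
      (u / (((n:ℝ) - 1) * ((n:ℝ) - 2))) ^ 2 *
        (Ric i₀ a ^ 2 + Ric i₀ b ^ 2
          - 2 * Ric i₀ a * Ric i₀ b * (if a = b then (1:ℝ) else 0)) := by
    intro a ha b hb
    by_cases hab : a = b
    · subst hab
      rw [Finset.sum_eq_zero (fun c _ => by rw [sub_self, mul_zero, zero_div]; ring)]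
      rw [if_pos rfl]; ring
    · have key : ∀ c ∈ S,
          (u * (Ric i₀ a * (if b = c then (1:ℝ) else 0)
              - Ric i₀ b * (if a = c then (1:ℝ) else 0)) /
            (((n:ℝ) - 1) * ((n:ℝ) - 2))) ^ 2 =
          (u / (((n:ℝ) - 1) * ((n:ℝ) - 2))) ^ 2 *
            ((if b = c then (1:ℝ) else 0) * Ric i₀ a ^ 2
              + (if a = c then (1:ℝ) else 0) * Ric i₀ b ^ 2) := by
        intro c _
        by_cases h1 : b = c
        · by_cases h2 : a = c
          · exact absurd (h2.trans h1.symm) hab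
          · simp only [h1, h2, if_pos rfl, if_neg, ite_true, ite_false]
            field_simp; ring
        · by_cases h2 : a = c
          · simp only [h1, h2, if_pos rfl, if_neg, ite_true, ite_false]
            field_simp; ring
          · simp only [h1, h2, if_neg, ite_false]
            field_simp; ring
      rw [Finset.sum_congr rfl key, ← Finset.mul_sum, Finset.sum_add_distrib]
      simp only [ite_mul, one_mul, zero_mul]
      rw [Finset.sum_ite_eq, Finset.sum_ite_eq, if_pos ha, if_pos hb, if_neg hab]
      ring
  have Hk1 : ∀ a ∈ S, ∑ k, (D i₀ a k) ^ 2 =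
      (u * Ric i₀ a / ((n:ℝ) - 1)) ^ 2 +
        ∑ b ∈ S, (u * (Ric a b - (R - Ric i₀ i₀) / ((n:ℝ) - 1) *
          (if a = b then (1:ℝ) else 0)) / ((n:ℝ) - 2)) ^ 2 := by
    intro a ha
    rw [← Finset.add_sum_erase _ (fun k => (D i₀ a k) ^ 2) (Finset.mem_univ i₀),
      c1 a (hmem a ha)]
    congr 1
    exact Finset.sum_congr rfl fun b hb => by rw [c3 a b (hmem a ha) (hmem b hb)]
  have Hk2 : ∀ a ∈ S, ∑ k, (D a i₀ k) ^ 2 =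
      (u * Ric i₀ a / ((n:ℝ) - 1)) ^ 2 +
        ∑ b ∈ S, (u * (Ric a b - (R - Ric i₀ i₀) / ((n:ℝ) - 1) *
          (if a = b then (1:ℝ) else 0)) / ((n:ℝ) - 2)) ^ 2 := by
    intro a ha
    rw [← Finset.add_sum_erase _ (fun k => (D a i₀ k) ^ 2) (Finset.mem_univ i₀),
      c2 a (hmem a ha), neg_sq]
    congr 1
    exact Finset.sum_congr rfl fun b hb => by
      rw [c4 a b (hmem a ha) (hmem b hb), neg_sq]
  have Hk3 : ∀ a ∈ S, ∀ b ∈ S, ∑ k, (D a b k) ^ 2 =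
      (u / (((n:ℝ) - 1) * ((n:ℝ) - 2))) ^ 2 *
        (Ric i₀ a ^ 2 + Ric i₀ b ^ 2
          - 2 * Ric i₀ a * Ric i₀ b * (if a = b then (1:ℝ) else 0)) := by
    intro a ha b hb
    rw [← Finset.add_sum_erase _ (fun k => (D a b k) ^ 2) (Finset.mem_univ i₀),
      c5 a b (hmem a ha) (hmem b hb)]
    have hrw : ∑ c ∈ S, (D a b c) ^ 2 =
        ∑ c ∈ S, (u * (Ric i₀ a * (if b = c then (1:ℝ) else 0)
            - Ric i₀ b * (if a = c then (1:ℝ) else 0)) /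
          (((n:ℝ) - 1) * ((n:ℝ) - 2))) ^ 2 :=
      Finset.sum_congr rfl fun c hc => by
        rw [c6 a b c (hmem a ha) (hmem b hb) (hmem c hc)]
    rw [hrw, hsq a ha b hb]
    ring
  -- sums over j
  have Hj0 : ∑ j, ∑ k, (D i₀ j k) ^ 2 =
      ∑ a ∈ S, ((u * Ric i₀ a / ((n:ℝ) - 1)) ^ 2 +
        ∑ b ∈ S, (u * (Ric a b - (R - Ric i₀ i₀) / ((n:ℝ) - 1) *
          (if a = b then (1:ℝ) else 0)) / ((n:ℝ) - 2)) ^ 2) := by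
    rw [← Finset.add_sum_erase _ (fun j => ∑ k, (D i₀ j k) ^ 2) (Finset.mem_univ i₀)]
    have h0 : ∑ k, (D i₀ i₀ k) ^ 2 = 0 := by simp [c0]
    rw [h0, zero_add]
    exact Finset.sum_congr rfl Hk1
  have Hj1 : ∀ a ∈ S, ∑ j, ∑ k, (D a j k) ^ 2 =
      ((u * Ric i₀ a / ((n:ℝ) - 1)) ^ 2 +
        ∑ b ∈ S, (u * (Ric a b - (R - Ric i₀ i₀) / ((n:ℝ) - 1) *
          (if a = b then (1:ℝ) else 0)) / ((n:ℝ) - 2)) ^ 2) +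
      ∑ b ∈ S, (u / (((n:ℝ) - 1) * ((n:ℝ) - 2))) ^ 2 *
        (Ric i₀ a ^ 2 + Ric i₀ b ^ 2
          - 2 * Ric i₀ a * Ric i₀ b * (if a = b then (1:ℝ) else 0)) := by
    intro a ha
    rw [← Finset.add_sum_erase _ (fun j => ∑ k, (D a j k) ^ 2) (Finset.mem_univ i₀),
      Hk2 a ha]
    congr 1
    exact Finset.sum_congr rfl fun b hb => Hk3 a ha b hb
  -- assemble
  rw [← Finset.add_sum_erase _ (fun i => ∑ j, ∑ k, (D i j k) ^ 2) (Finset.mem_univ i₀),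
    Hj0, Finset.sum_congr rfl Hj1]
  rw [Finset.sum_add_distrib, Finset.sum_add_distrib, Finset.sum_add_distrib]
  -- closed forms
  have hA : ∑ a ∈ S, (u * Ric i₀ a / ((n:ℝ) - 1)) ^ 2 =
      u ^ 2 / ((n:ℝ) - 1) ^ 2 * ∑ a ∈ S, Ric i₀ a ^ 2 := by
    rw [Finset.mul_sum]
    exact Finset.sum_congr rfl fun a _ => by field_simp
  have hB : ∑ a ∈ S, ∑ b ∈ S, (u * (Ric a b - (R - Ric i₀ i₀) / ((n:ℝ) - 1) *
          (if a = b then (1:ℝ) else 0)) / ((n:ℝ) - 2)) ^ 2 =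
      u ^ 2 / ((n:ℝ) - 2) ^ 2 * ∑ a ∈ S, ∑ b ∈ S,
        (Ric a b - (R - Ric i₀ i₀) / ((n:ℝ) - 1) *
          (if a = b then (1:ℝ) else 0)) ^ 2 := by
    rw [Finset.mul_sum]
    refine Finset.sum_congr rfl fun a _ => ?_
    rw [Finset.mul_sum]
    exact Finset.sum_congr rfl fun b _ => by field_simp
  have hinner : ∑ a ∈ S, ∑ b ∈ S, (Ric i₀ a ^ 2 + Ric i₀ b ^ 2
        - 2 * Ric i₀ a * Ric i₀ b * (if a = b then (1:ℝ) else 0)) =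
      2 * ((n:ℝ) - 2) * ∑ a ∈ S, Ric i₀ a ^ 2 := by
    have h1 : ∀ a ∈ S, ∑ b ∈ S, (Ric i₀ a ^ 2 + Ric i₀ b ^ 2
          - 2 * Ric i₀ a * Ric i₀ b * (if a = b then (1:ℝ) else 0)) =
        ((S.card : ℝ) * Ric i₀ a ^ 2 + ∑ b ∈ S, Ric i₀ b ^ 2) - 2 * Ric i₀ a ^ 2 := by
      intro a ha
      rw [Finset.sum_sub_distrib, Finset.sum_add_distrib, Finset.sum_const,
        nsmul_eq_mul]
      congr 1
      simp only [mul_ite, mul_one, mul_zero]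
      rw [Finset.sum_ite_eq, if_pos ha]
      ring
    rw [Finset.sum_congr rfl h1, Finset.sum_sub_distrib, Finset.sum_add_distrib,
      Finset.sum_const, nsmul_eq_mul, ← Finset.mul_sum, ← Finset.mul_sum, hcard]
    ring
  have hC : ∑ a ∈ S, ∑ b ∈ S, (u / (((n:ℝ) - 1) * ((n:ℝ) - 2))) ^ 2 *
        (Ric i₀ a ^ 2 + Ric i₀ b ^ 2
          - 2 * Ric i₀ a * Ric i₀ b * (if a = b then (1:ℝ) else 0)) =
      (u / (((n:ℝ) - 1) * ((n:ℝ) - 2))) ^ 2 *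
        (2 * ((n:ℝ) - 2) * ∑ a ∈ S, Ric i₀ a ^ 2) := by
    simp only [← Finset.mul_sum]
    rw [hinner]
  rw [hA, hB, hC]
  field_simp
  ring
end

section
/- If D_{ijk} = 0 at a point where ∇f ≠ 0, then in an orthonormal frame with e₁ = ∇f/|∇f|, one has R_{1a} = 0 for all a ≥ 2 (so ∇f is an eigenvector of the Ricci tensor) and R_{ab} = ((R - R_{11})/(n-1))g_{ab} for a, b ≥ 2. -/
/-- If the Cao–Chen tensor `D_{ijk}` vanishes at a point
where `∇f ≠ 0`, then in an orthonormal frame with `e₁ = ∇f/|∇f|` (index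
`i₀`, so `df i₀ = |∇f| ≠ 0` and `df a = 0` for `a ≠ i₀`), one has
`R_{1a} = 0` for all `a ≠ i₀` (so `∇f` is an eigenvector of the Ricci
tensor) and `R_{ab} = ((R - R_{11})/(n-1)) g_{ab}` for tangential indices
`a, b ≠ i₀`. -/
theorem D_zero_ricci_structure (n : ℕ) (hn : 3 ≤ n) (R : ℝ)
    (i₀ : Fin n) (df : Fin n → ℝ) (Ric : Fin n → Fin n → ℝ)
    (D : Fin n → Fin n → Fin n → ℝ)
    (hdf : ∀ a, a ≠ i₀ → df a = 0)
    (hdf0 : df i₀ ≠ 0)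
    (hRicsymm : ∀ i j, Ric i j = Ric j i)
    (hRtrace : R = ∑ i, Ric i i)
    (hDdef : ∀ i j k, D i j k =
      (1 / ((n : ℝ) - 2)) * (Ric k j * df i - Ric k i * df j)
      + (1 / (((n : ℝ) - 1) * ((n : ℝ) - 2))) *
          ((∑ l, Ric i l * df l) * (if j = k then (1 : ℝ) else 0)
            - (∑ l, Ric j l * df l) * (if i = k then (1 : ℝ) else 0))
      - (R / (((n : ℝ) - 1) * ((n : ℝ) - 2))) *
          ((if k = j then (1 : ℝ) else 0) * df i
            - (if k = i then (1 : ℝ) else 0) * df j))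
    (hD0 : ∀ i j k, D i j k = 0) :
    (∀ a, a ≠ i₀ → Ric i₀ a = 0) ∧
    (∀ a b, a ≠ i₀ → b ≠ i₀ →
      Ric a b = (R - Ric i₀ i₀) / ((n : ℝ) - 1) *
        (if a = b then (1 : ℝ) else 0)) := by

  have hn3 : (3:ℝ) ≤ (n:ℝ) := by exact_mod_cast hn
  have hn1 : (n:ℝ) - 1 ≠ 0 := by linarith
  have hn2 : (n:ℝ) - 2 ≠ 0 := by linarith
  have hsum : ∀ i, (∑ l, Ric i l * df l) = Ric i i₀ * df i₀ := by
    intro i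
    refine Finset.sum_eq_single i₀ (fun l _ hl => by rw [hdf l hl, mul_zero]) (by simp)
  have key : ∀ a k, a ≠ i₀ →
      (1 / ((n : ℝ) - 2)) * (Ric k a * df i₀)
      + (1 / (((n : ℝ) - 1) * ((n : ℝ) - 2))) *
          ((Ric i₀ i₀ * df i₀) * (if a = k then (1 : ℝ) else 0)
            - (Ric a i₀ * df i₀) * (if i₀ = k then (1 : ℝ) else 0))
      - (R / (((n : ℝ) - 1) * ((n : ℝ) - 2))) *
          ((if k = a then (1 : ℝ) else 0) * df i₀) = 0 := by
    intro a k ha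
    have h := (hDdef i₀ a k).symm.trans (hD0 i₀ a k)
    rw [hsum, hsum, hdf a ha] at h
    linarith [h]
  constructor
  · intro a ha
    have h := key a i₀ ha
    rw [if_neg (fun h' : a = i₀ => ha h'), if_pos rfl, if_neg (fun h' : i₀ = a => ha h'.symm)] at h
    rw [hRicsymm a i₀] at h
    field_simp at h
    have h2 : (Ric i₀ a * df i₀) * (((n:ℝ)-2) * ((n:ℝ)-2)) = 0 := by
      linear_combination ((n:ℝ)-2) * h
    rcases mul_eq_zero.mp h2 with h3 | h3
    · rcases mul_eq_zero.mp h3 with h4 | h4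
      · exact h4
      · exact absurd h4 hdf0
    · exact absurd h3 (mul_ne_zero hn2 hn2)
  · intro a b ha hb
    have h := key a b ha
    rw [if_neg (fun h' : i₀ = b => hb h'.symm)] at h
    by_cases hab : a = b
    · subst hab
      simp only [if_pos rfl, if_true, mul_one, mul_zero] at h ⊢
      field_simp at h
      have h3 : ((Ric a a * ((n:ℝ)-1) + Ric i₀ i₀ - R) * df i₀) * (((n:ℝ)-2) * (((n:ℝ)-1)*((n:ℝ)-2))) = 0 := by
        linear_combination (((n:ℝ)-2) * (((n:ℝ)-1)*((n:ℝ)-2))) * h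
      rcases mul_eq_zero.mp h3 with h4 | h4
      · rcases mul_eq_zero.mp h4 with h5 | h5
        · field_simp
          linarith
        · exact absurd h5 hdf0
      · exact absurd h4 (mul_ne_zero hn2 (mul_ne_zero hn1 hn2))
    · rw [if_neg hab, if_neg (fun h' : b = a => hab h'.symm)] at h
      rw [if_neg hab, mul_zero]
      field_simp at h
      have h' : (Ric b a * ((n:ℝ)-1)) * df i₀ = 0 := by linear_combination h
      rcases mul_eq_zero.mp h' with h3 | h3
      · rw [hRicsymm]; exact (mul_eq_zero.mp h3).resolve_right hn1
      · exact absurd h3 hdf0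
end

section
/- On a regular level surface Σ_c of a quasi Yamabe gradient soliton, the second fundamental form (with respect to unit normal ∇f/|∇f|) is h_{ab} = ((R - ρ)/|∇f|)g_{ab}, so the mean curvature is H = (n-1)(R - ρ)/|∇f|; in particular Σ_c is totally umbilical. -/
open Finset

/-- On a regular level surface `Σ_c` of a quasi Yamabe
gradient soliton (at a point, orthonormal frame with `e₁ = ∇f/|∇f|` of index
`i₀`, so `df i₀ = |∇f| > 0`, `df a = 0` for `a ≠ i₀`; the second fundamental
form is `h_ab = f_ab / |∇f|` for tangential `a, b ≠ i₀`), one has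
`h_ab = ((R - ρ)/|∇f|) g_ab`, the mean curvature is
`H = (n-1)(R - ρ)/|∇f|`, and in particular `Σ_c` is totally umbilical:
`h_ab = (H/(n-1)) g_ab`. -/
theorem quasi_yamabe_second_fundamental_form (n : ℕ) (hn : 3 ≤ n)
    (m ρ R : ℝ) (hm : m ≠ 0) (i₀ : Fin n)
    (Hf : Fin n → Fin n → ℝ) (df : Fin n → ℝ)
    (hdf : ∀ a, a ≠ i₀ → df a = 0)
    (hdf0 : 0 < df i₀)
    (hsoliton : ∀ i j, (R - ρ) * (if i = j then (1 : ℝ) else 0) =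
      Hf i j - (1 / m) * (df i * df j)) :
    (∀ a b, a ≠ i₀ → b ≠ i₀ →
      Hf a b / df i₀ = ((R - ρ) / df i₀) * (if a = b then (1 : ℝ) else 0)) ∧
    (∑ a ∈ univ.filter (fun a => a ≠ i₀), Hf a a / df i₀)
      = ((n : ℝ) - 1) * (R - ρ) / df i₀ ∧
    (∀ a b, a ≠ i₀ → b ≠ i₀ →
      Hf a b / df i₀ =
        ((∑ a' ∈ univ.filter (fun a' => a' ≠ i₀), Hf a' a' / df i₀) /
          ((n : ℝ) - 1)) * (if a = b then (1 : ℝ) else 0)) := by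
  have hHf : ∀ a b, a ≠ i₀ → b ≠ i₀ →
      Hf a b = (R - ρ) * (if a = b then (1 : ℝ) else 0) := by
    intro a b ha hb
    have := hsoliton a b
    rw [hdf a ha] at this
    linarith [this]
  have h1 : ∀ a b, a ≠ i₀ → b ≠ i₀ →
      Hf a b / df i₀ = ((R - ρ) / df i₀) * (if a = b then (1 : ℝ) else 0) := by
    intro a b ha hb
    rw [hHf a b ha hb]
    ring
  have hcard : (univ.filter (fun a : Fin n => a ≠ i₀)).card = n - 1 := by
    rw [Finset.filter_ne', Finset.card_erase_of_mem (Finset.mem_univ _), Finset.card_univ,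
      Fintype.card_fin]
  have hsum : (∑ a ∈ univ.filter (fun a => a ≠ i₀), Hf a a / df i₀)
      = ((n : ℝ) - 1) * (R - ρ) / df i₀ := by
    have : ∀ a ∈ univ.filter (fun a : Fin n => a ≠ i₀),
        Hf a a / df i₀ = (R - ρ) / df i₀ := by
      intro a ha
      simp only [Finset.mem_filter] at ha
      rw [h1 a a ha.2 ha.2]
      simp
    rw [Finset.sum_congr rfl this, Finset.sum_const, hcard, nsmul_eq_mul]
    have hn1 : (1 : ℕ) ≤ n := by omega
    rw [Nat.cast_sub hn1]
    push_cast
    ring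
  refine ⟨h1, hsum, ?_⟩
  intro a b ha hb
  rw [h1 a b ha hb, hsum]
  have hne : (n : ℝ) - 1 ≠ 0 := by
    have : (3 : ℝ) ≤ (n : ℝ) := by exact_mod_cast hn
    linarith
  field_simp
end

section
/- For n = 3, on a regular level surface Σ_c of a quasi Yamabe gradient soliton, the intrinsic sectional curvature satisfies R^Σ_{abab} = R/2 - R_{11} + (R - ρ)²/|∇f|² for orthonormal tangent directions a ≠ b, and hence is constant on Σ_c. -/
/-- For `n = 3`, on a regular level surface `Σ_c` of a
quasi Yamabe gradient soliton (at a point, orthonormal frame with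
`e₁ = ∇f/|∇f|` of index `0`, so `df 0 = |∇f| > 0` and `df a = 0` for
`a ≠ 0`), the intrinsic sectional curvature computed via the Gauss equation
satisfies `R^Σ_{abab} = R/2 - R_{11} + (R - ρ)²/|∇f|²` for orthonormal
tangent directions `a ≠ b` (hence it is the same constant expression in
quantities constant on `Σ_c`).  Here `hW3` expresses that the Weyl tensor
vanishes in dimension 3, `hGauss` is the Gauss equation with second
fundamental form `h_ab = f_ab/|∇f|`, and `hRtrace` that `R` is the trace of
the Ricci tensor. -/
theorem quasi_yamabe_level_surface_curvature_dim3 (m ρ R : ℝ) (hm : m ≠ 0)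
    (df : Fin 3 → ℝ) (Hf Ric : Fin 3 → Fin 3 → ℝ)
    (Rm : Fin 3 → Fin 3 → Fin 3 → Fin 3 → ℝ)
    (RSigma : Fin 3 → Fin 3 → ℝ)
    (hdf : ∀ a, a ≠ 0 → df a = 0)
    (hdf0 : 0 < df 0)
    (hsoliton : ∀ i j, (R - ρ) * (if i = j then (1 : ℝ) else 0) =
      Hf i j - (1 / m) * (df i * df j))
    (hRtrace : R = ∑ i, Ric i i)
    (hW3 : ∀ i j k l, Rm i j k l =
      (Ric i k * (if j = l then (1 : ℝ) else 0)
        - Ric i l * (if j = k then (1 : ℝ) else 0)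
        + Ric j l * (if i = k then (1 : ℝ) else 0)
        - Ric j k * (if i = l then (1 : ℝ) else 0))
      - (R / 2) * ((if i = k then (1 : ℝ) else 0) * (if j = l then (1 : ℝ) else 0)
        - (if i = l then (1 : ℝ) else 0) * (if j = k then (1 : ℝ) else 0)))
    (hGauss : ∀ a b, a ≠ 0 → b ≠ 0 → a ≠ b →
      RSigma a b = Rm a b a b + (Hf a a / df 0) * (Hf b b / df 0)
        - (Hf a b / df 0) ^ 2) :
    ∀ a b, a ≠ 0 → b ≠ 0 → a ≠ b →
      RSigma a b = R / 2 - Ric 0 0 + (R - ρ) ^ 2 / df 0 ^ 2 := by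
  intro a b ha hb hab
  have hHaa : Hf a a = R - ρ := by
    have := hsoliton a a; simp [hdf a ha] at this; linarith
  have hHbb : Hf b b = R - ρ := by
    have := hsoliton b b; simp [hdf b hb] at this; linarith
  have hHab : Hf a b = 0 := by
    have := hsoliton a b; simp [hdf a ha, hab] at this; linarith
  have hRm : Rm a b a b = Ric a a + Ric b b - R / 2 := by
    have := hW3 a b a b; simp [hab, hab.symm] at this; linarith
  have hsum : Ric a a + Ric b b = R - Ric 0 0 := by
    rw [hRtrace, Fin.sum_univ_three]
    fin_cases a <;> fin_cases b <;> simp_all <;> ring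
  have h0 : df 0 ≠ 0 := ne_of_gt hdf0
  rw [hGauss a b ha hb hab, hRm, hHaa, hHbb, hHab, hsum]
  field_simp
  ring
end

section
/- In dimension 4, if the Weyl tensor W satisfies W(·,·,·,v) = 0 for a nonzero vector v at a point (i.e., all contractions with v vanish), then W = 0 at that point. -/
open Finset

private lemma weylAux_dim3 (S : Fin 3 → Fin 3 → Fin 3 → Fin 3 → ℝ)
    (s1 : ∀ a b c d, S a b c d = -S b a c d)
    (s2 : ∀ a b c d, S a b c d = -S a b d c)
    (s3 : ∀ a b c d, S a b c d = S c d a b)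
    (htr : ∀ b d, ∑ a, S a b a d = 0) :
    ∀ a b c d, S a b c d = 0 := by
  have hz1 : ∀ a c d, S a a c d = 0 := fun a c d => by have := s1 a a c d; linarith
  have hz2 : ∀ a b c, S a b c c = 0 := fun a b c => by have := s2 a b c c; linarith
  have htr' : ∀ b d, S 0 b 0 d + S 1 b 1 d + S 2 b 2 d = 0 := by
    intro b d; have := htr b d; rwa [Fin.sum_univ_three] at this
  have c1 : S 0 1 0 1 = S 1 0 1 0 := by rw [s1 0 1 0 1, s2 1 0 0 1]; ring
  have c2 : S 0 2 0 2 = S 2 0 2 0 := by rw [s1 0 2 0 2, s2 2 0 0 2]; ring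
  have c3 : S 1 2 1 2 = S 2 1 2 1 := by rw [s1 1 2 1 2, s2 2 1 1 2]; ring
  have b1 : S 1 0 1 0 = 0 := by
    have e00 := htr' 0 0; have e11 := htr' 1 1; have e22 := htr' 2 2
    have z0 := hz1 0 0 0; have z1 := hz1 1 1 1; have z2 := hz1 2 2 2
    linarith
  have b2 : S 2 0 2 0 = 0 := by
    have e00 := htr' 0 0; have e11 := htr' 1 1; have e22 := htr' 2 2
    have z0 := hz1 0 0 0; have z1 := hz1 1 1 1; have z2 := hz1 2 2 2
    linarith
  have b3 : S 2 1 2 1 = 0 := by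
    have e00 := htr' 0 0; have e11 := htr' 1 1; have e22 := htr' 2 2
    have z0 := hz1 0 0 0; have z1 := hz1 1 1 1; have z2 := hz1 2 2 2
    linarith
  have b4 : S 2 1 2 0 = 0 := by
    have e10 := htr' 1 0
    have z0 := hz2 0 1 0; have z1 := hz1 1 1 0
    linarith
  have b5 : S 2 1 1 0 = 0 := by
    have e20 := htr' 2 0
    have z0 := hz2 0 2 0; have z1 := hz1 2 2 0
    have c : S 1 2 1 0 = -S 2 1 1 0 := s1 1 2 1 0
    linarith
  have b6 : S 2 0 1 0 = 0 := by
    have e21 := htr' 2 1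
    have z1 := hz1 1 2 1  -- S 1 2 1 1 : hz2 1 2 1? last pair (1,1): hz2 a b c : S a b c c; S 1 2 1 1 = hz2 1 2 1
    have z1' := hz2 1 2 1
    have z2' := hz1 2 2 1
    have c : S 0 2 0 1 = S 2 0 1 0 := by rw [s1 0 2 0 1, s2 2 0 0 1]; ring
    linarith
  have o1 : ∀ c d, S 0 1 c d = -S 1 0 c d := fun c d => s1 0 1 c d
  have o2 : ∀ c d, S 0 2 c d = -S 2 0 c d := fun c d => s1 0 2 c d
  have o3 : ∀ c d, S 1 2 c d = -S 2 1 c d := fun c d => s1 1 2 c d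
  have o4 : ∀ a b, S a b 0 1 = -S a b 1 0 := fun a b => s2 a b 0 1
  have o5 : ∀ a b, S a b 0 2 = -S a b 2 0 := fun a b => s2 a b 0 2
  have o6 : ∀ a b, S a b 1 2 = -S a b 2 1 := fun a b => s2 a b 1 2
  have p1 : S 1 0 2 0 = S 2 0 1 0 := s3 1 0 2 0
  have p2 : S 1 0 2 1 = S 2 1 1 0 := s3 1 0 2 1
  have p3 : S 2 0 2 1 = S 2 1 2 0 := s3 2 0 2 1
  have n0 : (⟨0, by norm_num⟩ : Fin 3) = 0 := rfl
  have n1 : (⟨1, by norm_num⟩ : Fin 3) = 1 := rfl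
  have n2 : (⟨2, by norm_num⟩ : Fin 3) = 2 := rfl
  intro a b c d
  fin_cases a <;> fin_cases b <;> fin_cases c <;> fin_cases d <;>
    simp only [n0, n1, n2, Fin.isValue, o1, o2, o3, o4, o5, o6, p1, p2, p3, b1, b2, b3, b4, b5, b6,
      hz1, hz2, neg_neg, neg_zero]

open Finset

private def weylAux_T (W : Fin 4 → Fin 4 → Fin 4 → Fin 4 → ℝ) (B : Fin 4 → Fin 4 → ℝ)
    (a b c d : Fin 4) : ℝ :=
  ∑ i, ∑ j, ∑ k, ∑ l, W i j k l * (B a i * B b j * B c k * B d l)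

private lemma weylAux_sum_outer_in (f : Fin 4 → Fin 4 → Fin 4 → Fin 4 → Fin 4 → ℝ) :
    ∑ a, ∑ i, ∑ j, ∑ k, ∑ l, f a i j k l = ∑ i, ∑ j, ∑ k, ∑ l, ∑ a, f a i j k l := by
  rw [Finset.sum_comm]
  refine Finset.sum_congr rfl fun i _ => ?_
  rw [Finset.sum_comm]
  refine Finset.sum_congr rfl fun j _ => ?_
  rw [Finset.sum_comm]
  exact Finset.sum_congr rfl fun k _ => Finset.sum_comm

private lemma weylAux_pairswap (f : Fin 4 → Fin 4 → Fin 4 → Fin 4 → ℝ) :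
    ∑ i, ∑ j, ∑ k, ∑ l, f i j k l = ∑ k, ∑ l, ∑ i, ∑ j, f i j k l := by
  calc ∑ i, ∑ j, ∑ k, ∑ l, f i j k l
      = ∑ i, ∑ k, ∑ j, ∑ l, f i j k l :=
        Finset.sum_congr rfl fun i _ => Finset.sum_comm
    _ = ∑ k, ∑ i, ∑ j, ∑ l, f i j k l := Finset.sum_comm
    _ = ∑ k, ∑ i, ∑ l, ∑ j, f i j k l :=
        Finset.sum_congr rfl fun k _ => Finset.sum_congr rfl fun i _ => Finset.sum_comm
    _ = ∑ k, ∑ l, ∑ i, ∑ j, f i j k l :=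
        Finset.sum_congr rfl fun k _ => Finset.sum_comm

private lemma weylAux_sym1 (W : Fin 4 → Fin 4 → Fin 4 → Fin 4 → ℝ) (B : Fin 4 → Fin 4 → ℝ)
    (hW1 : ∀ i j k l, W i j k l = -W j i k l) (a b c d : Fin 4) :
    weylAux_T W B a b c d = -weylAux_T W B b a c d := by
  unfold weylAux_T
  calc ∑ i, ∑ j, ∑ k, ∑ l, W i j k l * (B a i * B b j * B c k * B d l)
      = ∑ i, ∑ j, ∑ k, ∑ l, -(W j i k l * (B b j * B a i * B c k * B d l)) := by
        refine Finset.sum_congr rfl fun i _ => Finset.sum_congr rfl fun j _ =>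
          Finset.sum_congr rfl fun k _ => Finset.sum_congr rfl fun l _ => ?_
        rw [hW1 i j k l]; ring
    _ = ∑ j, ∑ i, ∑ k, ∑ l, -(W j i k l * (B b j * B a i * B c k * B d l)) := Finset.sum_comm
    _ = -∑ j, ∑ i, ∑ k, ∑ l, W j i k l * (B b j * B a i * B c k * B d l) := by
        simp [Finset.sum_neg_distrib]

private lemma weylAux_sym2 (W : Fin 4 → Fin 4 → Fin 4 → Fin 4 → ℝ) (B : Fin 4 → Fin 4 → ℝ)
    (hW2 : ∀ i j k l, W i j k l = -W i j l k) (a b c d : Fin 4) :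
    weylAux_T W B a b c d = -weylAux_T W B a b d c := by
  unfold weylAux_T
  calc ∑ i, ∑ j, ∑ k, ∑ l, W i j k l * (B a i * B b j * B c k * B d l)
      = ∑ i, ∑ j, ∑ k, ∑ l, -(W i j l k * (B a i * B b j * B d l * B c k)) := by
        refine Finset.sum_congr rfl fun i _ => Finset.sum_congr rfl fun j _ =>
          Finset.sum_congr rfl fun k _ => Finset.sum_congr rfl fun l _ => ?_
        rw [hW2 i j k l]; ring
    _ = ∑ i, ∑ j, ∑ l, ∑ k, -(W i j l k * (B a i * B b j * B d l * B c k)) :=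
        Finset.sum_congr rfl fun i _ => Finset.sum_congr rfl fun j _ => Finset.sum_comm
    _ = -∑ i, ∑ j, ∑ l, ∑ k, W i j l k * (B a i * B b j * B d l * B c k) := by
        simp [Finset.sum_neg_distrib]

private lemma weylAux_sym3 (W : Fin 4 → Fin 4 → Fin 4 → Fin 4 → ℝ) (B : Fin 4 → Fin 4 → ℝ)
    (hW3 : ∀ i j k l, W i j k l = W k l i j) (a b c d : Fin 4) :
    weylAux_T W B a b c d = weylAux_T W B c d a b := by
  unfold weylAux_T
  calc ∑ i, ∑ j, ∑ k, ∑ l, W i j k l * (B a i * B b j * B c k * B d l)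
      = ∑ i, ∑ j, ∑ k, ∑ l, W k l i j * (B c k * B d l * B a i * B b j) := by
        refine Finset.sum_congr rfl fun i _ => Finset.sum_congr rfl fun j _ =>
          Finset.sum_congr rfl fun k _ => Finset.sum_congr rfl fun l _ => ?_
        rw [hW3 i j k l]; ring
    _ = ∑ k, ∑ l, ∑ i, ∑ j, W k l i j * (B c k * B d l * B a i * B b j) := weylAux_pairswap _

private lemma weylAux_trace (W : Fin 4 → Fin 4 → Fin 4 → Fin 4 → ℝ) (B : Fin 4 → Fin 4 → ℝ)
    (hcols : ∀ i k, ∑ a, B a i * B a k = if i = k then (1:ℝ) else 0)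
    (htrace : ∀ j l, ∑ i, W i j i l = 0) (b d : Fin 4) :
    ∑ a, weylAux_T W B a b a d = 0 := by
  unfold weylAux_T
  rw [weylAux_sum_outer_in (fun a i j k l => W i j k l * (B a i * B b j * B a k * B d l))]
  have h2 : ∀ i j k l, ∑ a, W i j k l * (B a i * B b j * B a k * B d l)
      = if i = k then W i j k l * (B b j * B d l) else 0 := by
    intro i j k l
    have : ∑ a, W i j k l * (B a i * B b j * B a k * B d l)
        = (W i j k l * (B b j * B d l)) * ∑ a, B a i * B a k := by
      rw [Finset.mul_sum]
      exact Finset.sum_congr rfl fun a _ => by ring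
    rw [this, hcols i k]
    by_cases h : i = k <;> simp [h]
  simp only [h2]
  have h3 : ∀ i j, ∑ k, ∑ l, (if i = k then W i j k l * (B b j * B d l) else 0)
      = ∑ l, W i j i l * (B b j * B d l) := by
    intro i j
    rw [Finset.sum_comm]
    simp
  simp only [h3]
  have h4 : ∑ i, ∑ j, ∑ l, W i j i l * (B b j * B d l)
      = ∑ j, ∑ l, ∑ i, W i j i l * (B b j * B d l) := by
    rw [Finset.sum_comm]
    exact Finset.sum_congr rfl fun j _ => Finset.sum_comm
  rw [h4]
  have h5 : ∀ j l, ∑ i, W i j i l * (B b j * B d l) = 0 := by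
    intro j l
    rw [← Finset.sum_mul, htrace j l, zero_mul]
  simp [h5]

private lemma weylAux_last (W : Fin 4 → Fin 4 → Fin 4 → Fin 4 → ℝ) (B : Fin 4 → Fin 4 → ℝ)
    (d0 : Fin 4) (h : ∀ i j k, ∑ l, W i j k l * B d0 l = 0) (a b c : Fin 4) :
    weylAux_T W B a b c d0 = 0 := by
  unfold weylAux_T
  have h1 : ∀ i j k, ∑ l, W i j k l * (B a i * B b j * B c k * B d0 l)
      = (B a i * B b j * B c k) * ∑ l, W i j k l * B d0 l := by
    intro i j k
    rw [Finset.mul_sum]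
    exact Finset.sum_congr rfl fun l _ => by ring
  simp [h1, h]

private lemma weylAux_inv_step (B : Fin 4 → Fin 4 → ℝ)
    (hcols : ∀ i k, ∑ a, B a i * B a k = if i = k then (1:ℝ) else 0)
    (X : Fin 4 → ℝ) (h : ∀ a, ∑ i, B a i * X i = 0) : ∀ i, X i = 0 := by
  intro i'
  have h0 : X i' = ∑ i, (if i = i' then (1:ℝ) else 0) * X i := by simp
  rw [h0]
  calc ∑ i, (if i = i' then (1:ℝ) else 0) * X i
      = ∑ i, (∑ a, B a i * B a i') * X i :=
        Finset.sum_congr rfl fun i _ => by rw [hcols i i']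
    _ = ∑ i, ∑ a, B a i * B a i' * X i := by
        exact Finset.sum_congr rfl fun i _ => by rw [Finset.sum_mul]
    _ = ∑ a, ∑ i, B a i * B a i' * X i := Finset.sum_comm
    _ = ∑ a, B a i' * ∑ i, B a i * X i := by
        refine Finset.sum_congr rfl fun a _ => ?_
        rw [Finset.mul_sum]
        exact Finset.sum_congr rfl fun i _ => by ring
    _ = 0 := by simp [h]

private lemma weylAux_inv (W : Fin 4 → Fin 4 → Fin 4 → Fin 4 → ℝ) (B : Fin 4 → Fin 4 → ℝ)
    (hcols : ∀ i k, ∑ a, B a i * B a k = if i = k then (1:ℝ) else 0)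
    (hT : ∀ a b c d, weylAux_T W B a b c d = 0) : ∀ i j k l, W i j k l = 0 := by
  have h3 : ∀ b c d i, ∑ j, ∑ k, ∑ l, W i j k l * (B b j * B c k * B d l) = 0 := by
    intro b c d
    refine weylAux_inv_step B hcols _ fun a => ?_
    calc ∑ i, B a i * (∑ j, ∑ k, ∑ l, W i j k l * (B b j * B c k * B d l))
        = weylAux_T W B a b c d := by
          refine Finset.sum_congr rfl fun i _ => ?_
          rw [Finset.mul_sum]
          refine Finset.sum_congr rfl fun j _ => ?_
          rw [Finset.mul_sum]
          refine Finset.sum_congr rfl fun k _ => ?_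
          rw [Finset.mul_sum]
          exact Finset.sum_congr rfl fun l _ => by ring
      _ = 0 := hT a b c d
  have h2 : ∀ c d i j, ∑ k, ∑ l, W i j k l * (B c k * B d l) = 0 := by
    intro c d i
    refine weylAux_inv_step B hcols _ fun b => ?_
    calc ∑ j, B b j * (∑ k, ∑ l, W i j k l * (B c k * B d l))
        = ∑ j, ∑ k, ∑ l, W i j k l * (B b j * B c k * B d l) := by
          refine Finset.sum_congr rfl fun j _ => ?_
          rw [Finset.mul_sum]
          refine Finset.sum_congr rfl fun k _ => ?_
          rw [Finset.mul_sum]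
          exact Finset.sum_congr rfl fun l _ => by ring
      _ = 0 := h3 b c d i
  have h1 : ∀ d i j k, ∑ l, W i j k l * B d l = 0 := by
    intro d i j
    refine weylAux_inv_step B hcols _ fun c => ?_
    calc ∑ k, B c k * (∑ l, W i j k l * B d l)
        = ∑ k, ∑ l, W i j k l * (B c k * B d l) := by
          refine Finset.sum_congr rfl fun k _ => ?_
          rw [Finset.mul_sum]
          exact Finset.sum_congr rfl fun l _ => by ring
      _ = 0 := h2 c d i j
  intro i j k
  refine weylAux_inv_step B hcols _ fun d => ?_
  calc ∑ l, B d l * W i j k l = ∑ l, W i j k l * B d l :=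
        Finset.sum_congr rfl fun l _ => by ring
    _ = 0 := h1 d i j k

/-- In dimension 4, if an algebraic Weyl tensor `W` (a
tensor with the symmetries of the curvature tensor — antisymmetry in each
pair, symmetry under exchange of the pairs, the first Bianchi identity —
and totally trace-free) satisfies `W(·,·,·,v) = 0` for a nonzero vector
`v` at a point, then `W = 0` at that point.  Components are taken with
respect to an orthonormal basis of the 4-dimensional inner product space. -/
theorem weyl_dim4_vanishing_contraction
    (W : Fin 4 → Fin 4 → Fin 4 → Fin 4 → ℝ) (v : Fin 4 → ℝ)
    (hv : v ≠ 0)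
    (hW1 : ∀ i j k l, W i j k l = -W j i k l)
    (hW2 : ∀ i j k l, W i j k l = -W i j l k)
    (hW3 : ∀ i j k l, W i j k l = W k l i j)
    (hBianchi : ∀ i j k l, W i j k l + W i k l j + W i l j k = 0)
    (htrace : ∀ j l, ∑ i, W i j i l = 0)
    (hcontr : ∀ i j k, ∑ l, W i j k l * v l = 0) :
    ∀ i j k l, W i j k l = 0 := by
  classical
  set v' : EuclideanSpace ℝ (Fin 4) := (WithLp.equiv 2 (Fin 4 → ℝ)).symm v with hv'def
  have hv' : v' ≠ 0 := by
    intro h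
    apply hv
    have := (WithLp.equiv 2 (Fin 4 → ℝ)).symm.injective (h.trans rfl)
    exact this
  set u : EuclideanSpace ℝ (Fin 4) := ‖v'‖⁻¹ • v' with hudef
  have hu1 : ‖u‖ = 1 := norm_smul_inv_norm hv'
  have hON : Orthonormal ℝ (Set.restrict {(0 : Fin 4)} (fun _ : Fin 4 => u)) := by
    refine ⟨fun i => hu1, fun i j hij => absurd (Subsingleton.elim i j) hij⟩
  obtain ⟨bb, hbb⟩ := hON.exists_orthonormalBasis_extension_of_card_eq (by simp)
  have hb0 : bb 0 = u := hbb 0 rfl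
  set B : Fin 4 → Fin 4 → ℝ := fun a i => bb a i with hBdef
  have horth : ∀ a a', ∑ i, B a i * B a' i = if a = a' then (1:ℝ) else 0 := by
    intro a a'
    have h := orthonormal_iff_ite.mp bb.orthonormal a a'
    rw [PiLp.inner_apply] at h
    simpa [RCLike.inner_apply, hBdef, mul_comm] using h
  have hcols : ∀ i k, ∑ a, B a i * B a k = if i = k then (1:ℝ) else 0 := by
    have h1 : (Matrix.of B) * Matrix.transpose (Matrix.of B) = 1 := by
      ext a a'
      simpa [Matrix.mul_apply, Matrix.one_apply] using horth a a'
    have h2 : Matrix.transpose (Matrix.of B) * (Matrix.of B) = 1 := mul_eq_one_comm.mp h1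
    intro i k
    have h3 := congrFun (congrFun h2 i) k
    simpa [Matrix.mul_apply, Matrix.one_apply] using h3
  have h0 : ∀ i j k, ∑ l, W i j k l * B 0 l = 0 := by
    intro i j k
    have hB0 : ∀ l, B 0 l = ‖v'‖⁻¹ * v l := by
      intro l
      show bb 0 l = _
      rw [hb0, hudef]
      simp [hv'def]
    calc ∑ l, W i j k l * B 0 l = ∑ l, ‖v'‖⁻¹ * (W i j k l * v l) := by
          refine Finset.sum_congr rfl fun l _ => ?_
          rw [hB0]; ring
      _ = ‖v'‖⁻¹ * ∑ l, W i j k l * v l := (Finset.mul_sum _ _ _).symm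
      _ = 0 := by rw [hcontr i j k, mul_zero]
  have hT1 := weylAux_sym1 W B hW1
  have hT2 := weylAux_sym2 W B hW2
  have hT3 := weylAux_sym3 W B hW3
  have hTtr := weylAux_trace W B hcols htrace
  have z4 : ∀ a b c, weylAux_T W B a b c 0 = 0 := weylAux_last W B 0 h0
  have z3 : ∀ a b d, weylAux_T W B a b 0 d = 0 := by
    intro a b d
    rw [hT2 a b 0 d, z4 a b d, neg_zero]
  have z1 : ∀ b c d, weylAux_T W B 0 b c d = 0 := by
    intro b c d
    rw [hT3 0 b c d, hT2 c d 0 b, z4 c d b, neg_zero]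
  have z2 : ∀ a c d, weylAux_T W B a 0 c d = 0 := by
    intro a c d
    rw [hT1 a 0 c d, z1 a c d, neg_zero]
  have hS := weylAux_dim3
    (fun a b c d => weylAux_T W B a.succ b.succ c.succ d.succ)
    (fun a b c d => hT1 _ _ _ _)
    (fun a b c d => hT2 _ _ _ _)
    (fun a b c d => hT3 _ _ _ _)
    (by
      intro b d
      have h := hTtr b.succ d.succ
      rw [Fin.sum_univ_succ] at h
      rw [z1 b.succ 0 d.succ] at h
      linarith)
  have hT0 : ∀ a b c d, weylAux_T W B a b c d = 0 := by
    intro a b c d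
    rcases Fin.eq_zero_or_eq_succ a with rfl | ⟨a', rfl⟩
    · exact z1 b c d
    rcases Fin.eq_zero_or_eq_succ b with rfl | ⟨b', rfl⟩
    · exact z2 _ c d
    rcases Fin.eq_zero_or_eq_succ c with rfl | ⟨c', rfl⟩
    · exact z3 _ _ d
    rcases Fin.eq_zero_or_eq_succ d with rfl | ⟨d', rfl⟩
    · exact z4 _ _ _
    exact hS a' b' c' d'
  exact weylAux_inv W B hcols hT0
end
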